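/- If f : Fin n → Fin n is an almost-permutation, then there is exactly one point of Fin n with no preimage under f, and this point is the unique non-periodic point of f. -/

import Mathlib

/-- If `f : Fin n → Fin n` is an almost-permutation (exactly `n-1` periodic points),
then there is exactly one point with no preimage under `f`, and this point is the
unique non-periodic point of `f`. -/
theorem stmt_2 (n : ℕ) (hn : 1 ≤ n) (f : Fin n → Fin n)
    (hf : Nat.card (Function.periodicPts f) = n - 1) :
    ∃ y : Fin n, (∀ z : Fin n, z ∉ Set.range f ↔ z = y) ∧
      (∀ z : Fin n, z ∉ Function.periodicPts f ↔ z = y) := by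
  classical
  set S := Function.periodicPts f with hS
  have hSfin : S.Finite := Set.toFinite _
  have hcard : S.ncard = n - 1 := by
    rw [Nat.card_coe_set_eq] at hf
    simpa [Nat.card_coe_set_eq] using hf
  have hcompl : Sᶜ.ncard = 1 := by
    have h1 : S.ncard + Sᶜ.ncard = n := by
      have := Set.ncard_add_ncard_compl S
      simpa using this
    omega
  obtain ⟨y, hy⟩ := Set.ncard_eq_one.mp hcompl
  have hyS : y ∉ S := by
    have : y ∈ Sᶜ := by rw [hy]; exact rfl
    exact this
  have hmem : ∀ z : Fin n, z ∉ S ↔ z = y := by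
    intro z
    constructor
    · intro hz
      have : z ∈ Sᶜ := hz
      rw [hy] at this; exact this
    · intro hz; rw [hz]; exact hyS
  -- Periodic points are in the range of f
  have hrange : ∀ z : Fin n, z ∈ S → z ∈ Set.range f := by
    intro z hz
    obtain ⟨ℓ, hℓ, hper⟩ := hz
    refine ⟨f^[ℓ-1] z, ?_⟩
    have : f (f^[ℓ-1] z) = f^[ℓ] z := by
      rw [← Function.iterate_succ_apply' f (ℓ-1) z]
      congr 1; omega
    rw [this]; exact hper
  -- y is not in the range of f
  have hyrange : y ∉ Set.range f := by
    intro hyr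
    have hsurj : Function.Surjective f := by
      intro z
      by_cases hz : z = y
      · subst hz; exact hyr
      · refine hrange z ?_
        by_contra h
        exact hz ((hmem z).mp h)
    have hbij : Function.Bijective f := (Finite.surjective_iff_bijective).mp hsurj
    set e := Equiv.ofBijective f hbij with he
    have hfe : ∀ x, f x = e x := fun x => rfl
    have hord : orderOf e ≠ 0 := by
      exact (orderOf_pos e).ne'
    have hyper : y ∈ S := by
      refine ⟨orderOf e, (orderOf_pos e), ?_⟩
      show f^[orderOf e] y = y
      have hiter : ∀ k (x : Fin n), f^[k] x = (e ^ k) x := by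
        intro k
        induction k with
        | zero => intro x; simp
        | succ k ih =>
          intro x
          rw [Function.iterate_succ_apply', ih, pow_succ', Equiv.Perm.mul_apply, hfe]
      rw [hiter, pow_orderOf_eq_one]
      rfl
    exact hyS hyper
  refine ⟨y, fun z => ⟨?_, ?_⟩, hmem⟩
  · intro hz
    by_contra hzy
    have : z ∈ S := by
      by_contra h; exact hzy ((hmem z).mp h)
    exact hz (hrange z this)
  · intro hz; rw [hz]; exact hyrange
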